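/- Let G be a finite simple graph. Let C(G) be the clique-inserted graph of G: for each vertex u of G of degree s, C(G) contains a complete graph K_s whose vertices are indexed by the edges of G incident with u; and for each edge e = (u, v) of G, C(G) contains an edge m_e joining the vertex indexed by e in u's clique to the vertex indexed by e in v's clique. Let M = {m_e : e ∈ E(G)}. Then M is a matching of C(G), every connected component of C(G) − M is a complete graph, and t(L(G)) equals the number of spanning trees of C(G) containing all edges of M. -/

import Mathlib

open SimpleGraph Finset

variable {V : Type*}

/-- The number of spanning trees of a graph `G`. -/
noncomputable def treeCount (G : SimpleGraph V) : ℕ :=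
  Nat.card {H : SimpleGraph V // H ≤ G ∧ H.IsTree}

/-- The number of spanning trees of `G` containing all edges of `H`. -/
noncomputable def treeCountContaining (G H : SimpleGraph V) : ℕ :=
  Nat.card {T : SimpleGraph V // T ≤ G ∧ H ≤ T ∧ T.IsTree}

/-- The symmetric function `e ↦ 1/d(u_e) + 1/d(v_e)`. -/
noncomputable def invDegSum [Fintype V] (G : SimpleGraph V) [DecidableRel G.Adj] :
    Sym2 V → ℚ :=
  Sym2.lift ⟨fun u v => (G.degree u : ℚ)⁻¹ + (G.degree v : ℚ)⁻¹, fun u v => add_comm _ _⟩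

/-- The graph obtained from `G` by replacing each edge of `F` by a path of length `r+1`
joining its two ends (inserting `r` new internal vertices on each such edge).
The internal vertex at distance `i` from `u` on the path replacing the edge `uv`
is represented by the unordered pair `{(u, i), (v, r+1-i)}`. -/
def SrOn (G : SimpleGraph V) (F : Set (Sym2 V)) (r : ℕ) :
    SimpleGraph (V ⊕ {p : Sym2 (V × ℕ) //
      ∃ u v i, G.Adj u v ∧ s(u, v) ∈ F ∧ 1 ≤ i ∧ i ≤ r ∧ p = s((u, i), (v, r + 1 - i))}) :=
  SimpleGraph.fromRel fun x y =>
    match x, y with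
    | Sum.inl u, Sum.inl v => G.Adj u v ∧ (s(u, v) ∉ F ∨ r = 0)
    | Sum.inl u, Sum.inr p => ∃ v, G.Adj u v ∧ s(u, v) ∈ F ∧
        (p : Sym2 (V × ℕ)) = s((u, 1), (v, r))
    | Sum.inr p, Sum.inr q => ∃ u v i, G.Adj u v ∧ s(u, v) ∈ F ∧ 1 ≤ i ∧ i + 1 ≤ r ∧
        (p : Sym2 (V × ℕ)) = s((u, i), (v, r + 1 - i)) ∧
        (q : Sym2 (V × ℕ)) = s((u, i + 1), (v, r - i))
    | Sum.inr _, Sum.inl _ => False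

/-- `S_r(G)`: every edge of `G` is replaced by a path of length `r+1`. -/
def Sr (G : SimpleGraph V) (r : ℕ) := SrOn G Set.univ r

/-- `G_{-E'}`: delete the edges of `E'` and attach a new pendant edge at each end of each
deleted edge (one new pendant vertex per edge-end incidence). -/
def pendantize (G : SimpleGraph V) (E' : Set (Sym2 V)) :
    SimpleGraph (V ⊕ {p : Sym2 V × V // p.1 ∈ E' ∧ p.2 ∈ p.1}) :=
  SimpleGraph.fromRel fun x y =>
    match x, y with
    | Sum.inl u, Sum.inl v => G.Adj u v ∧ s(u, v) ∉ E'
    | Sum.inl u, Sum.inr p => (p : Sym2 V × V).2 = u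
    | _, _ => False

/-- `G_{•e}`: subdivide the edge `xy` once. -/
def subdivideOnce (G : SimpleGraph V) (x y : V) : SimpleGraph (V ⊕ Unit) :=
  SimpleGraph.fromRel fun a b =>
    match a, b with
    | Sum.inl u, Sum.inl v => G.Adj u v ∧ s(u, v) ≠ s(x, y)
    | Sum.inl u, Sum.inr _ => u = x ∨ u = y
    | _, _ => False

/-- `G_{r•e}`: replace the edge `xy` by a path of length `r+1` (insert `r` new vertices). -/
def subdividePath (G : SimpleGraph V) (x y : V) (r : ℕ) : SimpleGraph (V ⊕ Fin r) :=
  SimpleGraph.fromRel fun a b =>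
    match a, b with
    | Sum.inl u, Sum.inl v => G.Adj u v ∧ (s(u, v) ≠ s(x, y) ∨ r = 0)
    | Sum.inl u, Sum.inr i => (u = x ∧ (i : ℕ) = 0) ∨ (u = y ∧ (i : ℕ) = r - 1)
    | Sum.inr i, Sum.inr j => (j : ℕ) = (i : ℕ) + 1
    | Sum.inr _, Sum.inl _ => False

/-- The clique-inserted graph `C(G)`: its vertices are the darts of `G`; the vertex of the
clique at `u` indexed by an edge `e` incident with `u` is the dart of `e` starting at `u`. -/
def cliqueInserted (G : SimpleGraph V) : SimpleGraph G.Dart where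
  Adj d d' := d ≠ d' ∧ (d.toProd.1 = d'.toProd.1 ∨ d.edge = d'.edge)
  symm := ⟨fun d d' h => ⟨h.1.symm, h.2.imp Eq.symm Eq.symm⟩⟩
  loopless := ⟨fun d h => h.1 rfl⟩

lemma aux_reach_delete {G : SimpleGraph V} {v w : V}
    (hr : (G \ fromEdgeSet {s(v, w)}).Reachable v w) :
    ∀ {a b : V}, G.Reachable a b → (G \ fromEdgeSet {s(v, w)}).Reachable a b := by
  intro a b ⟨p⟩
  induction p with
  | nil => exact Reachable.refl _
  | @cons a c b h p ih =>
    by_cases he : s(a, c) = s(v, w)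
    · rw [Sym2.eq_iff] at he
      rcases he with ⟨rfl, rfl⟩ | ⟨rfl, rfl⟩
      · exact hr.trans ih
      · exact hr.symm.trans ih
    · refine (Adj.reachable ?_).trans ih
      rw [sdiff_adj, fromEdgeSet_adj]
      exact ⟨h, fun hh => he hh.1⟩

lemma aux_edgeSet_delete (G : SimpleGraph V) (v w : V) :
    (G \ fromEdgeSet {s(v, w)}).edgeSet = G.edgeSet \ {s(v, w)} := by
  simp

lemma aux_connected_card [Fintype V] :
    ∀ (n : ℕ) (G : SimpleGraph V), Nat.card G.edgeSet = n → G.Connected →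
      Fintype.card V ≤ n + 1 := by
  intro n
  induction n using Nat.strong_induction_on with
  | _ n ih =>
    intro G hn hc
    classical
    by_cases hac : G.IsAcyclic
    · have ht : G.IsTree := ⟨hc, hac⟩
      letI : Fintype G.edgeSet := Fintype.ofFinite _
      have hcard := ht.card_edgeFinset
      rw [edgeFinset_card, ← Nat.card_eq_fintype_card, hn] at hcard
      omega
    · rw [isAcyclic_iff_forall_adj_isBridge] at hac
      push_neg at hac
      obtain ⟨v, w, hadj, hbr⟩ := hac
      rw [isBridge_iff] at hbr
      push_neg at hbr
      have hr : (G \ fromEdgeSet {s(v, w)}).Reachable v w := hbr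
      have hc' : (G \ fromEdgeSet {s(v, w)}).Connected := by
        haveI := hc.nonempty
        exact ⟨fun a b => aux_reach_delete hr (hc.preconnected a b)⟩
      have hmem : s(v, w) ∈ G.edgeSet := hadj
      have hfin : G.edgeSet.Finite := Set.toFinite _
      have hn1 : 1 ≤ n := by
        have : 0 < Nat.card G.edgeSet := by
          haveI : Nonempty G.edgeSet := ⟨⟨_, hmem⟩⟩
          exact Nat.card_pos
        omega
      have hcount : Nat.card ((G \ fromEdgeSet {s(v, w)}).edgeSet) = n - 1 := by
        rw [Nat.card_coe_set_eq, aux_edgeSet_delete, Set.ncard_diff_singleton_of_mem hmem]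
        rw [Nat.card_coe_set_eq] at hn
        omega
      have := ih (n - 1) (by omega) _ hcount hc'
      omega

lemma aux_isTree_of_card [Fintype V] {G : SimpleGraph V} (hc : G.Connected)
    (hcard : Nat.card G.edgeSet + 1 = Fintype.card V) : G.IsTree := by
  refine ⟨hc, ?_⟩
  by_contra hac
  rw [isAcyclic_iff_forall_adj_isBridge] at hac
  push_neg at hac
  obtain ⟨v, w, hadj, hbr⟩ := hac
  rw [isBridge_iff] at hbr
  push_neg at hbr
  have hr : (G \ fromEdgeSet {s(v, w)}).Reachable v w := hbr
  have hc' : (G \ fromEdgeSet {s(v, w)}).Connected := by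
    haveI := hc.nonempty
    exact ⟨fun a b => aux_reach_delete hr (hc.preconnected a b)⟩
  have hmem : s(v, w) ∈ G.edgeSet := hadj
  have hn1 : 1 ≤ Nat.card G.edgeSet := by
    haveI : Nonempty G.edgeSet := ⟨⟨_, hmem⟩⟩
    exact Nat.card_pos
  have hcount : Nat.card ((G \ fromEdgeSet {s(v, w)}).edgeSet) = Nat.card G.edgeSet - 1 := by
    rw [Nat.card_coe_set_eq, aux_edgeSet_delete, Set.ncard_diff_singleton_of_mem hmem,
      Nat.card_coe_set_eq]
  have := aux_connected_card _ _ hcount hc'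
  omega

/-- lift a subgraph of the line graph to a subgraph of the clique-inserted graph -/
def liftT (G : SimpleGraph V) (T : SimpleGraph G.edgeSet) : SimpleGraph G.Dart where
  Adj d d' := d ≠ d' ∧ (d.edge = d'.edge ∨
    (d.toProd.1 = d'.toProd.1 ∧ T.Adj ⟨d.edge, d.edge_mem⟩ ⟨d'.edge, d'.edge_mem⟩))
  symm := ⟨by
    rintro d d' ⟨h1, h2 | ⟨h3, h4⟩⟩
    · exact ⟨h1.symm, Or.inl h2.symm⟩
    · exact ⟨h1.symm, Or.inr ⟨h3.symm, h4.symm⟩⟩⟩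
  loopless := ⟨fun d h => h.1 rfl⟩

/-- project a subgraph of the clique-inserted graph to a subgraph of the line graph -/
def projT (G : SimpleGraph V) (T' : SimpleGraph G.Dart) : SimpleGraph G.edgeSet where
  Adj e f := ∃ d d' : G.Dart, d.edge = e.1 ∧ d'.edge = f.1 ∧ d.toProd.1 = d'.toProd.1 ∧
    e ≠ f ∧ T'.Adj d d'
  symm := ⟨by
    rintro e f ⟨d, d', h1, h2, h3, h4, h5⟩
    exact ⟨d', d, h2, h1, h3.symm, h4.symm, h5.symm⟩⟩
  loopless := ⟨fun e ⟨_, _, _, _, _, hne, _⟩ => hne rfl⟩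

lemma dart_eq_of_fst_edge {G : SimpleGraph V} {d d' : G.Dart}
    (h1 : d.toProd.1 = d'.toProd.1) (h2 : d.edge = d'.edge) : d = d' := by
  rw [dart_edge_eq_iff] at h2
  rcases h2 with rfl | rfl
  · rfl
  · exact absurd h1 d'.adj.ne'

lemma dart_symm_of_edge {G : SimpleGraph V} {d d' : G.Dart}
    (h1 : d ≠ d') (h2 : d.edge = d'.edge) : d' = d.symm := by
  rw [dart_edge_eq_iff] at h2
  rcases h2 with rfl | rfl
  · exact absurd rfl h1
  · exact (Dart.symm_symm d').symm

lemma exists_dart {G : SimpleGraph V} {e : Sym2 V} (he : e ∈ G.edgeSet) {u : V} (hu : u ∈ e) :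
    ∃ d : G.Dart, d.edge = e ∧ d.toProd.1 = u := by
  induction e with
  | _ a b =>
    rw [Sym2.mem_iff] at hu
    rw [mem_edgeSet] at he
    rcases hu with rfl | rfl
    · exact ⟨⟨(u, b), he⟩, rfl, rfl⟩
    · exact ⟨⟨(u, a), he.symm⟩, Sym2.eq_swap, rfl⟩

lemma fst_mem_edge {G : SimpleGraph V} (d : G.Dart) : d.toProd.1 ∈ d.edge :=
  Sym2.mem_mk_left _ _

lemma liftT_le (G : SimpleGraph V) (T : SimpleGraph G.edgeSet) :
    liftT G T ≤ cliqueInserted G := by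
  rintro d d' ⟨h1, h2 | ⟨h3, _⟩⟩
  · exact ⟨h1, Or.inr h2⟩
  · exact ⟨h1, Or.inl h3⟩

lemma M_le_liftT (G : SimpleGraph V) (T : SimpleGraph G.edgeSet) :
    fromEdgeSet {e : Sym2 G.Dart | ∃ d : G.Dart, e = s(d, d.symm)} ≤ liftT G T := by
  intro x y hxy
  rw [fromEdgeSet_adj] at hxy
  obtain ⟨⟨d, hd⟩, hne⟩ := hxy
  rw [Sym2.eq_iff] at hd
  have hedge : x.edge = y.edge := by
    rcases hd with ⟨rfl, rfl⟩ | ⟨rfl, rfl⟩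
    · exact (Dart.edge_symm x).symm
    · exact Dart.edge_symm y
  exact ⟨hne, Or.inl hedge⟩

lemma projT_le (G : SimpleGraph V) (T' : SimpleGraph G.Dart) :
    projT G T' ≤ G.lineGraph := by
  rintro e f ⟨d, d', h1, h2, h3, h4, _⟩
  refine ⟨h4, ⟨d.toProd.1, ?_, ?_⟩⟩
  · rw [← h1]; exact fst_mem_edge d
  · rw [← h2, h3]; exact fst_mem_edge d'

lemma shared_vertex_unique {e f : Sym2 V} (hne : e ≠ f) {u w : V}
    (h1 : u ∈ e) (h2 : u ∈ f) (h3 : w ∈ e) (h4 : w ∈ f) : u = w := by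
  by_contra h
  exact hne (Sym2.eq_of_ne_mem h h1 h3 h2 h4)

lemma projT_liftT {G : SimpleGraph V} {T : SimpleGraph G.edgeSet}
    (hT : T ≤ G.lineGraph) : projT G (liftT G T) = T := by
  ext e f
  constructor
  · rintro ⟨d, d', h1, h2, h3, h4, h5, h6 | ⟨_, h7⟩⟩
    · exact absurd (Subtype.ext (h1 ▸ h2 ▸ h6 : e.1 = f.1)) h4
    · have he : (⟨d.edge, d.edge_mem⟩ : G.edgeSet) = e := Subtype.ext h1
      have hf : (⟨d'.edge, d'.edge_mem⟩ : G.edgeSet) = f := Subtype.ext h2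
      rwa [he, hf] at h7
  · intro h
    obtain ⟨hne, u, hu1, hu2⟩ := hT h
    obtain ⟨d, hd1, hd2⟩ := exists_dart e.2 hu1
    obtain ⟨d', hd1', hd2'⟩ := exists_dart f.2 hu2
    have hne' : d ≠ d' := by
      intro hh
      exact hne (Subtype.ext (by rw [← hd1, hh, hd1']))
    refine ⟨d, d', hd1, hd1', hd2.trans hd2'.symm, hne, hne', Or.inr ⟨hd2.trans hd2'.symm, ?_⟩⟩
    have he : (⟨d.edge, d.edge_mem⟩ : G.edgeSet) = e := Subtype.ext hd1
    have hf : (⟨d'.edge, d'.edge_mem⟩ : G.edgeSet) = f := Subtype.ext hd1'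
    rwa [he, hf]

lemma liftT_projT {G : SimpleGraph V} {T' : SimpleGraph G.Dart}
    (hT' : T' ≤ cliqueInserted G) (hM : ∀ d : G.Dart, T'.Adj d d.symm) :
    liftT G (projT G T') = T' := by
  ext d d'
  constructor
  · rintro ⟨hne, hedge | ⟨hfst, c, c', hc1, hc2, hc3, hc4, hc5⟩⟩
    · rw [dart_symm_of_edge hne hedge]
      exact hM d
    · have hEne : d.edge ≠ d'.edge := fun hh => hc4 (Subtype.ext hh)
      have hc1' : c.edge = d.edge := hc1
      have hc2' : c'.edge = d'.edge := hc2
      have hufst : c.toProd.1 = d.toProd.1 := by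
        refine shared_vertex_unique hEne ?_ ?_ (fst_mem_edge d) ?_
        · rw [← hc1']; exact fst_mem_edge c
        · rw [← hc2', hc3]; exact fst_mem_edge c'
        · rw [hfst]; exact fst_mem_edge d'
      have hc : c = d := dart_eq_of_fst_edge hufst hc1'
      have hc' : c' = d' := dart_eq_of_fst_edge (by rw [← hc3, hufst, hfst]) hc2'
      rwa [hc, hc'] at hc5
  · intro h
    obtain ⟨hne, hfst | hedge⟩ := hT' h
    · have hEne : d.edge ≠ d'.edge := fun hh => hne (dart_eq_of_fst_edge hfst hh)
      exact ⟨hne, Or.inr ⟨hfst, d, d', rfl, rfl, hfst, fun hh => hEne (congrArg Subtype.val hh), h⟩⟩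
    · exact ⟨hne, Or.inl hedge⟩

lemma liftT_reach_proj {G : SimpleGraph V} {T : SimpleGraph G.edgeSet} {d d' : G.Dart}
    (h : (liftT G T).Reachable d d') :
    T.Reachable ⟨d.edge, d.edge_mem⟩ ⟨d'.edge, d'.edge_mem⟩ := by
  obtain ⟨p⟩ := h
  induction p with
  | nil => exact Reachable.refl _
  | @cons x y z h p ih =>
    obtain ⟨_, hedge | ⟨_, hadj⟩⟩ := h
    · have : (⟨x.edge, x.edge_mem⟩ : G.edgeSet) = ⟨y.edge, y.edge_mem⟩ := Subtype.ext hedge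
      rwa [this]
    · exact hadj.reachable.trans ih

lemma liftT_reach_of_walk {G : SimpleGraph V} {T : SimpleGraph G.edgeSet}
    (hT : T ≤ G.lineGraph) {e f : G.edgeSet} (w : T.Walk e f) :
    ∀ d d' : G.Dart, d.edge = e.1 → d'.edge = f.1 → (liftT G T).Reachable d d' := by
  induction w with
  | nil =>
    intro d d' h1 h2
    have hedge : d.edge = d'.edge := h1.trans h2.symm
    by_cases hdd : d = d'
    · rw [hdd]
    · exact Adj.reachable ⟨hdd, Or.inl hedge⟩
  | @cons e g f h p ih =>
    intro d d' h1 h2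
    obtain ⟨hne, u, hu1, hu2⟩ := hT h
    obtain ⟨c, hc1, hc2⟩ := exists_dart e.2 hu1
    obtain ⟨c', hc1', hc2'⟩ := exists_dart g.2 hu2
    have hdc : (liftT G T).Reachable d c := by
      by_cases hdd : d = c
      · rw [hdd]
      · exact Adj.reachable ⟨hdd, Or.inl (h1.trans hc1.symm)⟩
    have hcc : (liftT G T).Adj c c' := by
      refine ⟨fun hh => hne (Subtype.ext (by rw [← hc1, hh, hc1'])), Or.inr ⟨hc2.trans hc2'.symm, ?_⟩⟩
      have he : (⟨c.edge, c.edge_mem⟩ : G.edgeSet) = e := Subtype.ext hc1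
      have hf : (⟨c'.edge, c'.edge_mem⟩ : G.edgeSet) = g := Subtype.ext hc1'
      rwa [he, hf]
    exact (hdc.trans hcc.reachable).trans (ih c' d' hc1' h2)

lemma nonempty_dart_iff {G : SimpleGraph V} : Nonempty G.Dart ↔ Nonempty G.edgeSet := by
  constructor
  · rintro ⟨d⟩; exact ⟨⟨d.edge, d.edge_mem⟩⟩
  · rintro ⟨⟨e, he⟩⟩
    induction e with
    | _ a b => exact ⟨⟨(a, b), he⟩⟩

lemma exists_dart_of_edge {G : SimpleGraph V} (e : G.edgeSet) : ∃ d : G.Dart, d.edge = e.1 := by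
  obtain ⟨e, he⟩ := e
  induction e with
  | _ a b => exact ⟨⟨(a, b), he⟩, rfl⟩

lemma liftT_connected_iff {G : SimpleGraph V} {T : SimpleGraph G.edgeSet}
    (hT : T ≤ G.lineGraph) : (liftT G T).Connected ↔ T.Connected := by
  constructor
  · intro h
    haveI : Nonempty G.edgeSet := nonempty_dart_iff.mp h.nonempty
    refine ⟨fun e f => ?_⟩
    obtain ⟨d, hd⟩ := exists_dart_of_edge e
    obtain ⟨d', hd'⟩ := exists_dart_of_edge f
    have := liftT_reach_proj (h.preconnected d d')
    have he : (⟨d.edge, d.edge_mem⟩ : G.edgeSet) = e := Subtype.ext hd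
    have hf : (⟨d'.edge, d'.edge_mem⟩ : G.edgeSet) = f := Subtype.ext hd'
    rwa [he, hf] at this
  · intro h
    haveI : Nonempty G.Dart := nonempty_dart_iff.mpr h.nonempty
    refine ⟨fun d d' => ?_⟩
    obtain ⟨w⟩ := h.preconnected ⟨d.edge, d.edge_mem⟩ ⟨d'.edge, d'.edge_mem⟩
    exact liftT_reach_of_walk hT w d d' rfl rfl

open Classical in
noncomputable def liftDartMap (G : SimpleGraph V) (T : SimpleGraph G.edgeSet)
    (d : (liftT G T).Dart) : G.Dart ⊕ T.Dart :=
  if h : d.toProd.1.edge = d.toProd.2.edge then Sum.inl d.toProd.1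
  else Sum.inr ⟨(⟨d.toProd.1.edge, Dart.edge_mem _⟩, ⟨d.toProd.2.edge, Dart.edge_mem _⟩),
    (d.adj.2.resolve_left h).2⟩

lemma liftDartMap_bij {G : SimpleGraph V} {T : SimpleGraph G.edgeSet}
    (hT : T ≤ G.lineGraph) : Function.Bijective (liftDartMap G T) := by
  classical
  constructor
  · intro x y h
    by_cases hx : x.toProd.1.edge = x.toProd.2.edge <;>
      by_cases hy : y.toProd.1.edge = y.toProd.2.edge <;>
      simp only [liftDartMap, hx, hy, dif_pos, dif_neg, not_false_iff] at h
    · -- both inl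
      have h1 : x.toProd.1 = y.toProd.1 := by simpa using h
      have hx2 : x.toProd.2 = x.toProd.1.symm := dart_symm_of_edge x.adj.1 hx
      have hy2 : y.toProd.2 = y.toProd.1.symm := dart_symm_of_edge y.adj.1 hy
      exact Dart.ext _ _ (Prod.ext h1 (by rw [hx2, hy2, h1]))
    · exact absurd h (by simp)
    · exact absurd h (by simp)
    · -- both inr
      rw [Sum.inr.injEq, Dart.ext_iff, Prod.ext_iff, Subtype.ext_iff, Subtype.ext_iff] at h
      obtain ⟨h1, h2⟩ := h
      have h1' : x.toProd.1.edge = y.toProd.1.edge := h1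
      have h2' : x.toProd.2.edge = y.toProd.2.edge := h2
      have hxfst := (x.adj.2.resolve_left hx).1
      have hyfst := (y.adj.2.resolve_left hy).1
      have hu : x.toProd.1.toProd.1 = y.toProd.1.toProd.1 := by
        refine shared_vertex_unique hx (fst_mem_edge _) ?_ ?_ ?_
        · rw [hxfst]; exact fst_mem_edge _
        · rw [h1']; exact fst_mem_edge _
        · rw [h2', hyfst]; exact fst_mem_edge _
      have e1 : x.toProd.1 = y.toProd.1 := dart_eq_of_fst_edge hu h1'
      have e2 : x.toProd.2 = y.toProd.2 :=
        dart_eq_of_fst_edge (by rw [← hxfst, ← hyfst, hu]) h2'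
      exact Dart.ext _ _ (Prod.ext e1 e2)
  · rintro (d | t)
    · refine ⟨⟨(d, d.symm), ⟨(Dart.symm_ne d).symm, Or.inl (Dart.edge_symm d).symm⟩⟩, ?_⟩
      simp [liftDartMap]
    · obtain ⟨hne, u, hu1, hu2⟩ := hT t.adj
      obtain ⟨c, hc1, hc2⟩ := exists_dart t.toProd.1.2 hu1
      obtain ⟨c', hc1', hc2'⟩ := exists_dart t.toProd.2.2 hu2
      have hEne : c.edge ≠ c'.edge := by
        rw [hc1, hc1']
        exact fun hh => hne (Subtype.ext hh)
      have hadj : (liftT G T).Adj c c' := by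
        refine ⟨fun hh => hEne (congrArg Dart.edge hh), Or.inr ⟨hc2.trans hc2'.symm, ?_⟩⟩
        have he : (⟨c.edge, c.edge_mem⟩ : G.edgeSet) = t.toProd.1 := Subtype.ext hc1
        have hf : (⟨c'.edge, c'.edge_mem⟩ : G.edgeSet) = t.toProd.2 := Subtype.ext hc1'
        rw [he, hf]
        exact t.adj
      refine ⟨⟨(c, c'), hadj⟩, ?_⟩
      simp only [liftDartMap, dif_neg hEne]
      congr 1
      exact Dart.ext _ _ (Prod.ext (Subtype.ext hc1) (Subtype.ext hc1'))

lemma nat_card_dart {W : Type*} [Fintype W] (H : SimpleGraph W) :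
    Nat.card H.Dart = 2 * Nat.card H.edgeSet := by
  classical
  rw [Nat.card_eq_fintype_card, Nat.card_eq_fintype_card, ← edgeFinset_card,
    dart_card_eq_twice_card_edges]

lemma isTree_nat_card {W : Type*} [Fintype W] {H : SimpleGraph W} (h : H.IsTree) :
    Nat.card H.edgeSet + 1 = Fintype.card W := by
  classical
  rw [Nat.card_eq_fintype_card, ← edgeFinset_card]
  exact h.card_edgeFinset

lemma liftT_card_edge [Fintype V] {G : SimpleGraph V} {T : SimpleGraph G.edgeSet}
    (hT : T ≤ G.lineGraph) :
    Nat.card (liftT G T).edgeSet = Nat.card G.edgeSet + Nat.card T.edgeSet := by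
  classical
  have hd : Nat.card (liftT G T).Dart = Nat.card G.Dart + Nat.card T.Dart := by
    rw [Nat.card_eq_of_bijective _ (liftDartMap_bij hT), Nat.card_sum]
  rw [nat_card_dart, nat_card_dart, nat_card_dart] at hd
  omega

lemma liftT_isTree_iff [Fintype V] {G : SimpleGraph V} {T : SimpleGraph G.edgeSet}
    (hT : T ≤ G.lineGraph) : (liftT G T).IsTree ↔ T.IsTree := by
  classical
  have hdart : Fintype.card G.Dart = 2 * Nat.card G.edgeSet := by
    rw [← Nat.card_eq_fintype_card, nat_card_dart]
  have hedgecard : Fintype.card G.edgeSet = Nat.card G.edgeSet :=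
    (Nat.card_eq_fintype_card).symm
  constructor
  · intro h
    refine aux_isTree_of_card ((liftT_connected_iff hT).mp h.isConnected) ?_
    have h1 := isTree_nat_card h
    rw [liftT_card_edge hT, hdart] at h1
    omega
  · intro h
    refine aux_isTree_of_card ((liftT_connected_iff hT).mpr h.isConnected) ?_
    have h1 := isTree_nat_card h
    rw [liftT_card_edge hT, hdart]
    omega

noncomputable def treesEquiv [Fintype V] (G : SimpleGraph V) :
    {H : SimpleGraph G.edgeSet // H ≤ G.lineGraph ∧ H.IsTree} ≃
    {T' : SimpleGraph G.Dart // T' ≤ cliqueInserted G ∧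
      fromEdgeSet {e : Sym2 G.Dart | ∃ d : G.Dart, e = s(d, d.symm)} ≤ T' ∧ T'.IsTree} where
  toFun H := ⟨liftT G H.1, liftT_le G H.1, M_le_liftT G H.1,
    (liftT_isTree_iff H.2.1).mpr H.2.2⟩
  invFun T' := ⟨projT G T'.1, projT_le G T'.1, by
    have hM : ∀ d : G.Dart, T'.1.Adj d d.symm := fun d =>
      T'.2.2.1 (by rw [fromEdgeSet_adj]; exact ⟨⟨d, rfl⟩, (Dart.symm_ne d).symm⟩)
    have hlp := liftT_projT T'.2.1 hM
    rw [← liftT_isTree_iff (projT_le G T'.1), hlp]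
    exact T'.2.2.2⟩
  left_inv H := Subtype.ext (projT_liftT H.2.1)
  right_inv T' := Subtype.ext (liftT_projT T'.2.1 (fun d =>
    T'.2.2.1 (by rw [fromEdgeSet_adj]; exact ⟨⟨d, rfl⟩, (Dart.symm_ne d).symm⟩)))

lemma mk_symm_of_mem {G : SimpleGraph V} {x d : G.Dart} (h : x ∈ s(d, d.symm)) :
    s(x, x.symm) = s(d, d.symm) := by
  rw [Sym2.mem_iff] at h
  rcases h with rfl | rfl
  · rfl
  · rw [Dart.symm_symm]; exact Sym2.eq_swap


/-- For a finite simple graph `G`, with `C(G)` the clique-inserted graph (vertices: the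
darts of `G`) and `M = {s(d, d.symm) | d a dart}` the set of edges joining the two darts
of each edge: `M` is a matching of `C(G)`, every connected component of `C(G) − M` is a
complete graph, and `t(L(G))` equals the number of spanning trees of `C(G)` containing
all edges of `M`. -/
theorem stmt18 [Fintype V] (G : SimpleGraph V) :
    ({e : Sym2 G.Dart | ∃ d : G.Dart, e = s(d, d.symm)} ⊆ (cliqueInserted G).edgeSet ∧
      ∀ e ∈ {e : Sym2 G.Dart | ∃ d : G.Dart, e = s(d, d.symm)},
        ∀ f ∈ {e : Sym2 G.Dart | ∃ d : G.Dart, e = s(d, d.symm)},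
          e ≠ f → ∀ x : G.Dart, ¬(x ∈ e ∧ x ∈ f)) ∧
    (∀ x y : G.Dart,
      ((cliqueInserted G).deleteEdges
        {e : Sym2 G.Dart | ∃ d : G.Dart, e = s(d, d.symm)}).Reachable x y → x ≠ y →
      ((cliqueInserted G).deleteEdges
        {e : Sym2 G.Dart | ∃ d : G.Dart, e = s(d, d.symm)}).Adj x y) ∧
    treeCount (SimpleGraph.lineGraph G) =
      treeCountContaining (cliqueInserted G)
        (SimpleGraph.fromEdgeSet {e : Sym2 G.Dart | ∃ d : G.Dart, e = s(d, d.symm)}) := by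
  unfold treeCount treeCountContaining
  refine ⟨⟨?_, ?_⟩, ?_, ?_⟩
  · rintro e ⟨d, rfl⟩
    exact ⟨(Dart.symm_ne d).symm, Or.inr (Dart.edge_symm d).symm⟩
  · rintro e ⟨d, rfl⟩ f ⟨c, rfl⟩ hne x ⟨hx1, hx2⟩
    exact hne ((mk_symm_of_mem hx1).symm.trans (mk_symm_of_mem hx2))
  · intro x y hr hne
    have key : ∀ {a b : G.Dart},
        ((cliqueInserted G).deleteEdges
          {e : Sym2 G.Dart | ∃ d : G.Dart, e = s(d, d.symm)}).Reachable a b →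
        a.toProd.1 = b.toProd.1 := by
      rintro a b ⟨p⟩
      induction p with
      | nil => rfl
      | @cons a c b h p ih =>
        rw [deleteEdges_adj] at h
        obtain ⟨⟨hne', hfst | hedge⟩, hmem⟩ := h
        · exact hfst.trans ih
        · exact absurd ⟨a, by rw [dart_symm_of_edge hne' hedge]⟩ hmem
    have hfst := key hr
    rw [deleteEdges_adj]
    refine ⟨⟨hne, Or.inl hfst⟩, ?_⟩
    rintro ⟨d, hd⟩
    rw [Sym2.eq_iff] at hd
    rcases hd with ⟨rfl, rfl⟩ | ⟨rfl, rfl⟩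
    · exact Dart.fst_ne_snd _ hfst
    · exact Dart.snd_ne_fst _ hfst
  · exact Nat.card_congr (treesEquiv G)
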